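/- If every variable is bound, the polymatroid bound is finite: Let DC be a set of degree constraints over [n] under which every variable in [n] is bound. Then there is a finite constant M (depending only on DC) such that h([n]) ≤ M for every polymatroid h on [n] satisfying h(Y) − h(X) ≤ log₂ N_{Y|X} for all (X, Y, N_{Y|X}) ∈ DC. -/
import Mathlib


open Finset

/-- A polymatroid on `[n]`: a nonnegative set function with `h ∅ = 0` that is
monotone and submodular. -/
def IsPolymatroid {n : ℕ} (h : Finset (Fin n) → ℝ) : Prop :=
  h ∅ = 0 ∧ (∀ S, 0 ≤ h S) ∧ (∀ X Y, X ⊆ Y → h X ≤ h Y) ∧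
    (∀ X Y, h (X ∪ Y) + h (X ∩ Y) ≤ h X + h Y)

/-- **If every variable is bound, the polymatroid bound is finite.** If every set `B`
that is closed under the constraints (`X ⊆ B → Y ⊆ B` for each `(X, Y, N) ∈ DC`) is
all of `[n]` — i.e., every variable is bound — then there is a finite constant `M`,
depending only on `DC`, bounding `h([n])` over all polymatroids `h` satisfying the
degree constraints. -/
theorem bounded_when_all_bound
    {n : ℕ} (DC : Finset (Finset (Fin n) × Finset (Fin n) × ℕ))
    (hDCvalid : ∀ c ∈ DC, c.1 ⊂ c.2.1 ∧ 1 ≤ c.2.2)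
    (hbound : ∀ B : Finset (Fin n), (∀ c ∈ DC, c.1 ⊆ B → c.2.1 ⊆ B) → B = Finset.univ) :
    ∃ M : ℝ, ∀ h : Finset (Fin n) → ℝ, IsPolymatroid h →
      (∀ c ∈ DC, h c.2.1 - h c.1 ≤ Real.logb 2 (c.2.2 : ℝ)) →
      h Finset.univ ≤ M := by
  set L : ℝ := ∑ c ∈ DC, Real.logb 2 (c.2.2 : ℝ) with hL
  have hterm : ∀ c ∈ DC, (0:ℝ) ≤ Real.logb 2 (c.2.2 : ℝ) := by
    intro c hc
    apply Real.logb_nonneg (by norm_num)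
    exact_mod_cast (hDCvalid c hc).2
  have hLnonneg : 0 ≤ L := Finset.sum_nonneg hterm
  have hLle : ∀ c ∈ DC, Real.logb 2 (c.2.2 : ℝ) ≤ L := fun c hc =>
    Finset.single_le_sum hterm hc
  refine ⟨n * L, ?_⟩
  intro h hpoly hcons
  obtain ⟨h0, hnn, hmono, hsub⟩ := hpoly
  have key : ∀ k : ℕ, ∀ S : Finset (Fin n),
      (Finset.univ : Finset (Fin n)).card - S.card ≤ k →
      h Finset.univ ≤ h S + k * L := by
    intro k
    induction k with
    | zero =>
      intro S hS
      have hsub' : S ⊆ Finset.univ := Finset.subset_univ S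
      have : S = Finset.univ := by
        apply Finset.eq_of_subset_of_card_le hsub'
        omega
      simp [this]
    | succ k ih =>
      intro S hS
      by_cases heq : S = Finset.univ
      · rw [heq]
        nlinarith [hLnonneg]
      · -- S is not closed under constraints
        have : ¬ (∀ c ∈ DC, c.1 ⊆ S → c.2.1 ⊆ S) := fun hcl => heq (hbound S hcl)
        push_neg at this
        obtain ⟨c, hc, hXS, hYS⟩ := this
        set S' := S ∪ c.2.1 with hS'
        have hcard : S.card < S'.card := by
          apply Finset.card_lt_card
          constructor
          · exact Finset.subset_union_left
          · intro hsub2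
            exact hYS (Finset.union_subset_iff.mp (Finset.Subset.antisymm_iff.mp
              (Finset.Subset.antisymm Finset.subset_union_left hsub2)).2 |>.2)
        have hstep : h S' ≤ h S + L := by
          have h1 := hsub S c.2.1
          have h2 : h c.1 ≤ h (S ∩ c.2.1) := by
            apply hmono
            exact Finset.subset_inter hXS (hDCvalid c hc).1.subset
          have h3 := hcons c hc
          have h4 := hLle c hc
          linarith
        have hrec : h Finset.univ ≤ h S' + k * L := by
          apply ih
          omega
        push_cast
        linarith
  have := key n ∅ (by simp)
  simpa [h0] using this
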